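/- Let p ∈ (0, 1/2) and let s > 3 satisfy p(1 − s) > −1. Set I_s = ∫_1^∞ x^{−s} dx and let (X_n)_{n≥1} be i.i.d. random variables with values in [1, ∞) whose common law has density f(x) = x^{−s}/I_s on [1, ∞). Let (τ̂_n)_{n≥1} be the p-EMA of (X_n), i.e. τ̂_1 = X_1 and τ̂_{n+1} = (1 − (n+1)^{−p}) τ̂_n + (n+1)^{−p} X_{n+1}. Then almost surely the events {X_n ≥ 2 n^p} occur for infinitely many n, and on the event {X_n ≥ 2 n^p} one has τ̂_n ≥ 3 − n^{−p}; consequently, almost surely limsup_{n→∞} τ̂_n ≥ 3, and τ̂_n does not converge almost surely to the common mean η = E[X_1] = (s−1)/(s−2) < 2. -/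

import Mathlib

open Filter MeasureTheory Topology ProbabilityTheory
open scoped NNReal ENNReal

lemma aux_int16 (r : ℝ) (hr : r < -1) (a : ℝ) (ha : 0 < a) :
    ∫ x in Set.Ici a, x ^ r = a ^ (r + 1) / (-r - 1) := by
  rw [MeasureTheory.integral_Ici_eq_integral_Ioi, integral_Ioi_rpow_of_lt hr ha,
    div_eq_div_iff (by linarith) (by linarith)]
  ring

lemma aux_tail16 (s Is : ℝ) (hs : 3 < s) (hIsv : Is = 1 / (s - 1)) (a : ℝ) (ha : 1 ≤ a) :
    ((volume.restrict (Set.Ici (1 : ℝ))).withDensity fun x => ENNReal.ofReal (x ^ (-s) / Is))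
      (Set.Ici a) = ENNReal.ofReal (a ^ (1 - s)) := by
  have ha0 : (0:ℝ) < a := by linarith
  have hIspos : 0 < Is := by rw [hIsv]; apply div_pos one_pos; linarith
  rw [withDensity_apply _ measurableSet_Ici, Measure.restrict_restrict measurableSet_Ici,
    Set.Ici_inter_Ici, max_eq_left ha]
  have hint : IntegrableOn (fun x : ℝ => x ^ (-s) / Is) (Set.Ici a) := by
    rw [integrableOn_Ici_iff_integrableOn_Ioi]
    exact (integrableOn_Ioi_rpow_of_lt (by linarith) ha0).div_const _
  have hnn : 0 ≤ᵐ[volume.restrict (Set.Ici a)] fun x : ℝ => x ^ (-s) / Is := by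
    rw [EventuallyLE, ae_restrict_iff' measurableSet_Ici]
    filter_upwards with x hx
    have hx0 : (0:ℝ) < x := lt_of_lt_of_le ha0 hx
    positivity
  rw [← ofReal_integral_eq_lintegral_ofReal hint hnn]
  congr 1
  rw [integral_div, aux_int16 (-s) (by linarith) a ha0, hIsv]
  rw [show -s + 1 = 1 - s by ring]
  rw [show - -s - 1 = s - 1 by ring, div_div, mul_one_div, div_self (by linarith : s - 1 ≠ 0), div_one]


theorem stmt_16 {Ω : Type*} [MeasurableSpace Ω] (P : Measure Ω) [IsProbabilityMeasure P]
    (p : ℝ) (hp0 : 0 < p) (hp12 : p < 1 / 2)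
    (s : ℝ) (hs : 3 < s) (hps : -1 < p * (1 - s))
    (Is : ℝ) (hIs : Is = ∫ x in Set.Ioi (1 : ℝ), x ^ (-s))
    (X : ℕ → Ω → ℝ) (hXmeas : ∀ n, Measurable (X n))
    (hXval : ∀ n : ℕ, 1 ≤ n → ∀ ω, 1 ≤ X n ω)
    (hXindep : iIndepFun X P)
    (hXlaw : ∀ n : ℕ, 1 ≤ n → Measure.map (X n) P =
      ((volume.restrict (Set.Ici (1 : ℝ))).withDensity fun x => ENNReal.ofReal (x ^ (-s) / Is)))
    (τhat : Ω → ℕ → ℝ)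
    (hinit : ∀ ω, τhat ω 1 = X 1 ω)
    (hrec : ∀ ω, ∀ n : ℕ, 1 ≤ n →
      τhat ω (n + 1) =
        (1 - ((n : ℝ) + 1) ^ (-p)) * τhat ω n + ((n : ℝ) + 1) ^ (-p) * X (n + 1) ω) :
    (∀ᵐ ω ∂P, ∃ᶠ n : ℕ in atTop, 2 * (n : ℝ) ^ p ≤ X n ω) ∧
      (∀ ω, ∀ n : ℕ, 1 ≤ n → 2 * (n : ℝ) ^ p ≤ X n ω → 3 - (n : ℝ) ^ (-p) ≤ τhat ω n) ∧
      (∀ᵐ ω ∂P, (3 : EReal) ≤ Filter.limsup (fun n : ℕ => (τhat ω n : EReal)) atTop) ∧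
      ((∫ ω, X 1 ω ∂P) = (s - 1) / (s - 2) ∧ (s - 1) / (s - 2) < 2) ∧
      ¬ (∀ᵐ ω ∂P, Tendsto (fun n => τhat ω n) atTop (𝓝 ((s - 1) / (s - 2)))) := by
  have hIsv : Is = 1 / (s - 1) := by
    rw [hIs, integral_Ioi_rpow_of_lt (by linarith) one_pos, Real.one_rpow,
      div_eq_div_iff (by linarith) (by linarith)]
    ring
  -- τhat ≥ 1
  have hτ1 : ∀ ω, ∀ n : ℕ, 1 ≤ n → 1 ≤ τhat ω n := by
    intro ω n hn
    induction n, hn using Nat.le_induction with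
    | base => rw [hinit]; exact hXval 1 le_rfl ω
    | succ n hn ih =>
      have hb : (1:ℝ) ≤ (n:ℝ) + 1 := by have := n.cast_nonneg (α := ℝ); linarith
      have hc1 : ((n:ℝ) + 1) ^ (-p) ≤ 1 :=
        Real.rpow_le_one_of_one_le_of_nonpos hb (by linarith)
      have hc0 : 0 < ((n:ℝ) + 1) ^ (-p) := Real.rpow_pos_of_pos (by linarith) _
      rw [hrec ω n hn]
      nlinarith [hXval (n+1) (by omega) ω]
  -- part 2
  have part2 : ∀ ω, ∀ n : ℕ, 1 ≤ n → 2 * (n:ℝ) ^ p ≤ X n ω → 3 - (n:ℝ) ^ (-p) ≤ τhat ω n := by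
    intro ω n hn hX
    match n, hn with
    | 1, _ =>
      rw [hinit]
      simp only [Nat.cast_one, Real.one_rpow] at hX ⊢
      linarith
    | (m+2), _ =>
      have h1 : 1 ≤ m + 1 := by omega
      rw [show m + 2 = (m+1) + 1 from rfl, hrec ω (m+1) h1]
      have hcast : ((m+2:ℕ):ℝ) = ((m+1:ℕ):ℝ) + 1 := by push_cast; ring
      rw [hcast] at hX ⊢
      set a : ℝ := ((m+1:ℕ):ℝ) + 1 with ha
      have ha0 : (0:ℝ) < a := by positivity
      have ha1 : (1:ℝ) ≤ a := by simp [ha]; positivity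
      have hc1 : a ^ (-p) ≤ 1 := Real.rpow_le_one_of_one_le_of_nonpos ha1 (by linarith)
      have hc0 : 0 < a ^ (-p) := Real.rpow_pos_of_pos ha0 _
      have hmul : a ^ (-p) * a ^ p = 1 := by
        rw [← Real.rpow_add ha0]; simp
      have hτ := hτ1 ω (m+1) h1
      nlinarith [hX]
  -- Borel-Cantelli
  set A : ℕ → Set Ω := fun n => X n ⁻¹' Set.Ici (2 * (n:ℝ) ^ p) with hA
  have hAm : ∀ n, MeasurableSet (A n) := fun n => hXmeas n measurableSet_Ici
  have hAindep : iIndepSet A P := by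
    rw [iIndepSet_iff_meas_biInter hAm]
    intro S
    exact hXindep.measure_inter_preimage_eq_mul S (fun i _ => measurableSet_Ici)
  have hPA : ∀ n : ℕ, 1 ≤ n →
      P (A n) = ENNReal.ofReal (2 ^ (1-s) * (n:ℝ) ^ (p * (1-s))) := by
    intro n hn
    have hn1 : (1:ℝ) ≤ (n:ℝ) := by exact_mod_cast hn
    have hnp : (1:ℝ) ≤ (n:ℝ) ^ p := Real.one_le_rpow hn1 hp0.le
    have h2 : (1:ℝ) ≤ 2 * (n:ℝ) ^ p := by linarith
    have hmap : P (A n) = (Measure.map (X n) P) (Set.Ici (2 * (n:ℝ) ^ p)) := by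
      rw [Measure.map_apply (hXmeas n) measurableSet_Ici]
    rw [hmap, hXlaw n hn, aux_tail16 s Is hs hIsv _ h2]
    congr 1
    rw [Real.mul_rpow (by norm_num) (by linarith), ← Real.rpow_mul n.cast_nonneg]
  have hq : ¬ (p * (1 - s) < -1) := by linarith
  have hcpos : (0:ℝ) < 2 ^ (1-s) := Real.rpow_pos_of_pos two_pos _
  have hsum : ∑' n, P (A n) = ⊤ := by
    by_contra h
    have h1 : Summable fun n : ℕ => (P (A n)).toReal := ENNReal.summable_toReal h
    have h2 : Summable fun n : ℕ => (P (A (n+1))).toReal := (_root_.summable_nat_add_iff (f := fun n : ℕ => (P (A n)).toReal) 1).mpr h1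
    have h3 : Summable fun n : ℕ => 2 ^ (1-s) * (((n+1:ℕ)):ℝ) ^ (p*(1-s)) := by
      apply h2.congr
      intro n
      rw [hPA (n+1) (by omega), ENNReal.toReal_ofReal (by positivity)]
    have h4 : Summable fun n : ℕ => (((n+1:ℕ)):ℝ) ^ (p*(1-s)) := by
      apply (h3.mul_left (2 ^ (1-s))⁻¹).congr
      intro n
      field_simp
    have h5 : Summable fun n : ℕ => ((n:ℝ)) ^ (p*(1-s)) := (_root_.summable_nat_add_iff (f := fun n : ℕ => ((n:ℝ)) ^ (p*(1-s))) 1).mp h4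
    exact hq (Real.summable_nat_rpow.mp h5)
  have hBC := measure_limsup_eq_one hAm hAindep hsum
  have hael : ∀ᵐ ω ∂P, ω ∈ limsup A atTop := by
    rw [ae_iff]
    rw [show {a | ¬ a ∈ limsup A atTop} = (limsup A atTop)ᶜ from rfl,
      measure_compl (MeasurableSet.measurableSet_limsup hAm) (measure_ne_top _ _), hBC]
    simp
  have part1 : ∀ᵐ ω ∂P, ∃ᶠ n : ℕ in atTop, 2 * (n:ℝ)^p ≤ X n ω := by
    filter_upwards [hael] with ω hω
    exact mem_limsup_iff_frequently_mem.mp hω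
  have part3 : ∀ᵐ ω ∂P, (3 : EReal) ≤ Filter.limsup (fun n : ℕ => ((τhat ω n : ℝ) : EReal)) atTop := by
    filter_upwards [part1] with ω hω
    have key : ∀ ε : ℝ, 0 < ε →
        ((3 - ε : ℝ) : EReal) ≤ Filter.limsup (fun n : ℕ => ((τhat ω n : ℝ) : EReal)) atTop := by
      intro ε hε
      apply le_limsup_of_frequently_le'
      have htd : Tendsto (fun n : ℕ => (n:ℝ) ^ (-p)) atTop (𝓝 0) :=
        (tendsto_rpow_neg_atTop hp0).comp tendsto_natCast_atTop_atTop
      have hev : ∀ᶠ n : ℕ in atTop, (n:ℝ) ^ (-p) < ε ∧ 1 ≤ n :=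
        (htd.eventually_lt_const hε).and (eventually_ge_atTop 1)
      apply (hω.and_eventually hev).mono
      rintro n ⟨hXn, hlt, hn⟩
      have h := part2 ω n hn hXn
      exact EReal.coe_le_coe_iff.mpr (by linarith)
    have htd2 : Tendsto (fun k : ℕ => ((3 - 1/((k:ℝ)+1) : ℝ) : EReal)) atTop (𝓝 ((3:ℝ) : EReal)) := by
      rw [EReal.tendsto_coe]
      have h0 : Tendsto (fun k : ℕ => 1/((k:ℝ)+1)) atTop (𝓝 0) :=
        tendsto_one_div_add_atTop_nhds_zero_nat
      simpa using (tendsto_const_nhds (x := (3:ℝ))).sub h0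
    have h3 : ((3:ℝ) : EReal) = (3 : EReal) := by norm_cast
    rw [← h3]
    exact le_of_tendsto' htd2 (fun k => key _ (by positivity))
  have hIspos : 0 < Is := by rw [hIsv]; apply div_pos one_pos; linarith
  have hEX : (∫ ω, X 1 ω ∂P) = (s-1)/(s-2) := by
    have h1 : (∫ ω, X 1 ω ∂P) = ∫ x, x ∂(Measure.map (X 1) P) :=
      (integral_map (hXmeas 1).aemeasurable aestronglyMeasurable_id).symm
    rw [h1, hXlaw 1 le_rfl]
    have hfm : Measurable fun x : ℝ => Real.toNNReal (x ^ (-s) / Is) := by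
      fun_prop
    have hrw : (fun x : ℝ => ENNReal.ofReal (x ^ (-s) / Is))
        = fun x => ((Real.toNNReal (x ^ (-s) / Is) : ℝ≥0) : ℝ≥0∞) := rfl
    rw [hrw, integral_withDensity_eq_integral_smul hfm (fun x => x)]
    have hcongr : (∫ x in Set.Ici (1:ℝ), Real.toNNReal (x ^ (-s) / Is) • x)
        = ∫ x in Set.Ici (1:ℝ), Is⁻¹ * x ^ (1-s) := by
      apply setIntegral_congr_fun measurableSet_Ici
      intro x hx
      show (x ^ (-s) / Is).toNNReal • x = Is⁻¹ * x ^ (1-s)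
      have hx0 : (0:ℝ) < x := lt_of_lt_of_le one_pos hx
      have hnn : 0 ≤ x ^ (-s) / Is := by positivity
      rw [NNReal.smul_def, Real.coe_toNNReal _ hnn, smul_eq_mul, div_mul_eq_mul_div,
        ← Real.rpow_add_one hx0.ne' (-s), show -s+1 = 1-s by ring]
      ring
    rw [hcongr, integral_const_mul, aux_int16 (1-s) (by linarith) 1 one_pos, Real.one_rpow, hIsv,
      one_div, inv_inv, show -(1-s)-1 = s-2 by ring, mul_one_div]
  have hlt2 : (s-1)/(s-2) < 2 := by
    rw [div_lt_iff₀ (by linarith)]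
    linarith
  have part5 : ¬ (∀ᵐ ω ∂P, Tendsto (fun n => τhat ω n) atTop (𝓝 ((s - 1) / (s - 2)))) := by
    intro hconv
    have hne : (ae P).NeBot := ae_neBot.mpr (IsProbabilityMeasure.ne_zero P)
    obtain ⟨ω, hω1, hω2⟩ := (hconv.and part3).exists
    have hcoe : Tendsto (fun n : ℕ => ((τhat ω n : ℝ) : EReal)) atTop
        (𝓝 (((s-1)/(s-2) : ℝ) : EReal)) := EReal.tendsto_coe.mpr hω1
    rw [hcoe.limsup_eq] at hω2
    have h3 : (3:ℝ) ≤ (s-1)/(s-2) := by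
      rw [show (3:EReal) = ((3:ℝ):EReal) by norm_cast] at hω2
      exact EReal.coe_le_coe_iff.mp hω2
    linarith
  exact ⟨part1, part2, part3, ⟨hEX, hlt2⟩, part5⟩
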